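/- arXiv:quant-ph/0608125 — 2 statements merged into one kernel-verified Lean document; each statement's English description precedes it below -/
import Mathlib

section
/- The A₊-module A₋ of odd continuous functions on S² is finitely generated projective: it is generated by the three coordinate functions x₁, x₂, x₃, and is isomorphic to the image of the idempotent p̃ ∈ M₃(A₊) given by p̃ᵢⱼ = xᵢxⱼ acting on A₊³. -/
noncomputable section

abbrev S2 := Metric.sphere (0 : EuclideanSpace ℝ (Fin 3)) 1

def negS (x : S2) : S2 :=
  ⟨-(x : EuclideanSpace ℝ (Fin 3)), by
    have hx : ‖(x : EuclideanSpace ℝ (Fin 3))‖ = 1 := mem_sphere_zero_iff_norm.mp x.2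
    simp [mem_sphere_zero_iff_norm, hx]⟩

lemma coord_cont (i : Fin 3) : Continuous fun x : S2 => ((x.1 i : ℝ) : ℂ) :=
  Complex.continuous_ofReal.comp ((continuous_apply i).comp ((PiLp.continuous_ofLp 2 _).comp continuous_subtype_val))

lemma neg_coord (x : S2) (i : Fin 3) : (negS x).1 i = -(x.1 i) := rfl

lemma sum_sq (x : S2) : ∑ i, ((x.1 i : ℝ) : ℂ) * ((x.1 i : ℝ) : ℂ) = 1 := by
  have hx : ‖(x : EuclideanSpace ℝ (Fin 3))‖ = 1 := mem_sphere_zero_iff_norm.mp x.2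
  have h : (inner (𝕜 := ℝ) (x : EuclideanSpace ℝ (Fin 3)) x) = 1 := by
    rw [real_inner_self_eq_norm_sq, hx]; norm_num
  rw [PiLp.inner_apply] at h
  simp only [RCLike.inner_apply, conj_trivial] at h
  have : ((∑ i, x.1 i * x.1 i : ℝ) : ℂ) = 1 := by rw [h]; norm_num
  push_cast at this
  exact this

/-- The odd continuous functions on S². -/
def Aminus : Set (S2 → ℂ) := {f | Continuous f ∧ ∀ x, f (negS x) = -f x}

/-- The image p̃(A₊³) of the idempotent p̃ᵢⱼ = xᵢxⱼ acting on triples of even functions. -/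
def pA3 : Set (S2 → Fin 3 → ℂ) :=
  {v | Continuous v ∧ (∀ x, v (negS x) = v x) ∧
    (∀ x i, (∑ j, (((x.1 i * x.1 j : ℝ) : ℂ)) * v x j) = v x i)}

/-- The map f ↦ (x ↦ f(x)·x). -/
def T : (S2 → ℂ) → (S2 → Fin 3 → ℂ) :=
  fun f x i => f x * ((x.1 i : ℝ) : ℂ)

/-- A₋ is a finitely generated projective A₊-module: it is generated by the three
coordinate functions, and T identifies it with the image of the idempotent p̃ on A₊³. -/
theorem stmt6 :
    (∀ f ∈ Aminus, ∃ g : Fin 3 → S2 → ℂ,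
      (∀ i, Continuous (g i) ∧ ∀ x, g i (negS x) = g i x) ∧
      (∀ x, f x = ∑ i, ((x.1 i : ℝ) : ℂ) * g i x)) ∧
    (∀ f ∈ Aminus, T f ∈ pA3) ∧
    Set.BijOn T Aminus pA3 := by
  have hmem : ∀ f ∈ Aminus, T f ∈ pA3 := by
    rintro f ⟨hfc, hfo⟩
    refine ⟨?_, ?_, ?_⟩
    · exact continuous_pi fun i => hfc.mul (coord_cont i)
    · intro x
      funext i
      simp only [T, hfo, neg_coord]
      push_cast
      ring
    · intro x i
      have key : ∀ j, ((x.1 i * x.1 j : ℝ) : ℂ) * (T f x j)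
          = (((x.1 i : ℝ) : ℂ) * f x) * (((x.1 j : ℝ) : ℂ) * ((x.1 j : ℝ) : ℂ)) := by
        intro j; simp only [T]; push_cast; ring
      rw [Finset.sum_congr rfl fun j _ => key j, ← Finset.mul_sum, sum_sq, mul_one]
      simp only [T]; ring
  refine ⟨?_, hmem, hmem, ?_, ?_⟩
  · rintro f ⟨hfc, hfo⟩
    refine ⟨fun i x => f x * ((x.1 i : ℝ) : ℂ), fun i => ⟨hfc.mul (coord_cont i), ?_⟩, ?_⟩
    · intro x
      simp only [hfo, neg_coord]
      push_cast
      ring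
    · intro x
      have key : ∀ i, ((x.1 i : ℝ) : ℂ) * (f x * ((x.1 i : ℝ) : ℂ))
          = f x * (((x.1 i : ℝ) : ℂ) * ((x.1 i : ℝ) : ℂ)) := fun i => by ring
      rw [Finset.sum_congr rfl fun i _ => key i, ← Finset.mul_sum, sum_sq, mul_one]
  · rintro f ⟨hfc, hfo⟩ g ⟨hgc, hgo⟩ heq
    funext x
    have h : ∀ i, f x * ((x.1 i : ℝ) : ℂ) = g x * ((x.1 i : ℝ) : ℂ) := fun i =>
      congrFun (congrFun heq x) i
    have : f x * (∑ i, ((x.1 i : ℝ) : ℂ) * ((x.1 i : ℝ) : ℂ))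
        = g x * (∑ i, ((x.1 i : ℝ) : ℂ) * ((x.1 i : ℝ) : ℂ)) := by
      rw [Finset.mul_sum, Finset.mul_sum]
      exact Finset.sum_congr rfl fun i _ => by rw [← mul_assoc, ← mul_assoc, h i]
    rwa [sum_sq, mul_one, mul_one] at this
  · rintro v ⟨hvc, hve, hvi⟩
    refine ⟨fun x => ∑ j, ((x.1 j : ℝ) : ℂ) * v x j, ⟨?_, ?_⟩, ?_⟩
    · exact continuous_finset_sum _ fun j _ =>
        (coord_cont j).mul ((continuous_apply j).comp hvc)
    · intro x
      rw [← Finset.sum_neg_distrib]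
      refine Finset.sum_congr rfl fun j _ => ?_
      rw [hve x]
      simp only [neg_coord]; push_cast; ring
    · funext x i
      have key : ∀ j, ((x.1 i * x.1 j : ℝ) : ℂ) * v x j
          = (((x.1 j : ℝ) : ℂ) * v x j) * ((x.1 i : ℝ) : ℂ) := by
        intro j; push_cast; ring
      have := hvi x i
      rw [Finset.sum_congr rfl fun j _ => key j, ← Finset.sum_mul] at this
      simpa [T] using this
end
end

section
/- The A₊-module A₋ is not free of rank 1; equivalently, there is no single odd continuous function f on S² and even function realization making A₋ ≅ A₊ as A₊-modules. In particular, every odd continuous function on S² has a zero. -/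
noncomputable section

/-- The even continuous functions on S². -/
def Aplus : Set (S2 → ℂ) := {f | Continuous f ∧ ∀ x, f (negS x) = f x}

open Complex Set Real

lemma lemA (g : ℝ → ℂ) (hg : ContinuousOn g (Set.Icc 0 1))
    (h1 : ∀ s ∈ Set.Icc (0:ℝ) 1, Complex.exp (g s) = 1) : g 1 = g 0 := by
  have key : ∀ s ∈ Set.Icc (0:ℝ) 1, ∃ k : ℤ, g s = k * (2 * π * I) := by
    intro s hs
    exact Complex.exp_eq_one_iff.mp (h1 s hs)
  set u : ℝ → ℝ := fun s => (g s).im with hu_def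
  have hu : ContinuousOn u (Set.Icc 0 1) := Complex.continuous_im.comp_continuousOn hg
  have hval : ∀ s ∈ Set.Icc (0:ℝ) 1, ∃ k : ℤ, u s = 2 * π * k := by
    intro s hs
    obtain ⟨k, hk⟩ := key s hs
    refine ⟨k, ?_⟩
    simp [hu_def, hk, Complex.mul_im]
    ring
  have hπ : (0:ℝ) < π := Real.pi_pos
  have hu01 : u 1 = u 0 := by
    obtain ⟨k0, hk0⟩ := hval 0 (by constructor <;> norm_num)
    obtain ⟨k1, hk1⟩ := hval 1 (by constructor <;> norm_num)
    by_contra hne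
    rcases lt_or_gt_of_ne hne with h | h
    · -- u 1 < u 0
      have hk : k1 < k0 := by
        by_contra hkk
        push_neg at hkk
        have : (k0:ℝ) ≤ k1 := by exact_mod_cast hkk
        nlinarith
    -- mid value u 1 + π
      have hmem : u 1 + π ∈ Set.Icc (u 1) (u 0) := by
        constructor
        · linarith
        · have : (k1:ℝ) + 1 ≤ k0 := by exact_mod_cast hk
          nlinarith
      have := intermediate_value_Icc' zero_le_one hu hmem
      obtain ⟨s, hs, hus⟩ := this
      obtain ⟨k, hkm⟩ := hval s hs
      rw [hkm, hk1] at hus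
      have : (2*(k:ℝ)) = 2*k1 + 1 := by
        have h2 : π * (2*(k:ℝ)) = π * (2*(k1:ℝ) + 1) := by nlinarith
        exact mul_left_cancel₀ hπ.ne' h2
      have : (2*k : ℤ) = 2*k1 + 1 := by exact_mod_cast this
      omega
    · have hk : k0 < k1 := by
        by_contra hkk
        push_neg at hkk
        have : (k1:ℝ) ≤ k0 := by exact_mod_cast hkk
        nlinarith
      have hmem : u 0 + π ∈ Set.Icc (u 0) (u 1) := by
        constructor
        · linarith
        · have : (k0:ℝ) + 1 ≤ k1 := by exact_mod_cast hk
          nlinarith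
      have := intermediate_value_Icc zero_le_one hu hmem
      obtain ⟨s, hs, hus⟩ := this
      obtain ⟨k, hkm⟩ := hval s hs
      rw [hkm, hk0] at hus
      have : (2*(k:ℝ)) = 2*k0 + 1 := by
        have h2 : π * (2*(k:ℝ)) = π * (2*(k0:ℝ) + 1) := by nlinarith
        exact mul_left_cancel₀ hπ.ne' h2
      have : (2*k : ℤ) = 2*k0 + 1 := by exact_mod_cast this
      omega
  obtain ⟨k0, hk0⟩ := key 0 (by constructor <;> norm_num)
  obtain ⟨k1, hk1⟩ := key 1 (by constructor <;> norm_num)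
  have him : (2:ℝ) * π * k1 = 2 * π * k0 := by
    have e1 : u 1 = 2 * π * k1 := by simp [hu_def, hk1, Complex.mul_im]; ring
    have e0 : u 0 = 2 * π * k0 := by simp [hu_def, hk0, Complex.mul_im]; ring
    rw [← e1, ← e0, hu01]
  have : k1 = k0 := by
    have h2 : (k1:ℝ) = k0 := mul_left_cancel₀ (by positivity) him
    exact_mod_cast h2
  rw [hk0, hk1, this]

lemma min_lip (a x y : ℝ) : |min a x - min a y| ≤ |x - y| := by
  rcases le_total x y with h | h
  · have h1 : min a x ≤ min a y := min_le_min le_rfl h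
    rw [_root_.abs_of_nonpos (by linarith), _root_.abs_of_nonpos (by linarith)]
    rcases le_total a x with h2 | h2
    · rw [min_eq_left h2, min_eq_left (h2.trans h)]; linarith
    · rw [min_eq_right h2]
      have := min_le_right a y
      linarith
  · have h1 : min a y ≤ min a x := min_le_min le_rfl h
    rw [_root_.abs_of_nonneg (by linarith), _root_.abs_of_nonneg (by linarith)]
    rcases le_total a y with h2 | h2
    · rw [min_eq_left h2, min_eq_left (h2.trans h)]; linarith
    · rw [min_eq_right h2]
      have := min_le_right a x
      linarith

lemma liftLemma {X : Type*} [TopologicalSpace X] (K : X → ℝ → ℂ)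
    (hK : Continuous fun p : X × ℝ => K p.1 p.2)
    (hne : ∀ x t, K x t ≠ 0)
    (B : X → ℂ) (hB : Continuous B) (hBe : ∀ x, Complex.exp (B x) = K x 0)
    (n : ℕ) (hn : 0 < n)
    (hclose : ∀ (x : X), ∀ u v : ℝ, u ∈ Set.Icc (0:ℝ) 1 → v ∈ Set.Icc (0:ℝ) 1 →
      |u - v| ≤ 1 / n → ‖K x u - K x v‖ < ‖K x v‖) :
    ∃ Θ : X → ℝ → ℂ, Continuous (fun p : X × ℝ => Θ p.1 p.2) ∧
      ∀ x, ∀ t ∈ Set.Icc (0:ℝ) 1, Complex.exp (Θ x t) = K x t := by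
  have hn' : (0:ℝ) < n := by exact_mod_cast hn
  -- clamped grid evaluation
  set q : ℝ → ℕ → ℝ := fun t j => min (max t 0) (j / n) with hq_def
  have hq_mem : ∀ t (j : ℕ), j ≤ n → q t j ∈ Set.Icc (0:ℝ) 1 := by
    intro t j hj
    constructor
    · exact le_min (le_max_right _ _) (by positivity)
    · refine min_le_of_right_le ?_
      rw [div_le_one hn']
      exact_mod_cast hj
  have hq_close : ∀ t (j : ℕ), |q t (j+1) - q t j| ≤ 1 / n := by
    intro t j
    refine le_trans (min_lip _ _ _) ?_
    have : ((j:ℝ)+1) / n - j / n = 1 / n := by field_simp; ring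
    rw [show ((j+1 : ℕ):ℝ) = (j:ℝ)+1 by push_cast; ring, this,
      _root_.abs_of_nonneg (by positivity : (0:ℝ) ≤ 1/n)]
  -- the ratio is in the slit plane
  have hratio : ∀ (x : X) (t : ℝ) (j : ℕ), j < n →
      K x (q t (j+1)) / K x (q t j) ∈ Complex.slitPlane := by
    intro x t j hj
    have h1 := hclose x (q t (j+1)) (q t j) (hq_mem t (j+1) hj) (hq_mem t j hj.le)
      (hq_close t j)
    rw [Complex.mem_slitPlane_iff]
    left
    have hKv : 0 < ‖K x (q t j)‖ :=
      norm_pos_iff.mpr (hne x (q t j))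
    have habs : ‖K x (q t (j+1)) / K x (q t j) - 1‖ < 1 := by
      rw [div_sub_one (hne x (q t j)), norm_div, div_lt_one hKv]
      exact h1
    have := Complex.abs_re_le_norm (K x (q t (j+1)) / K x (q t j) - 1)
    have hre : |(K x (q t (j+1)) / K x (q t j)).re - 1| < 1 := by
      simpa [Complex.sub_re] using lt_of_le_of_lt this habs
    have := abs_lt.mp hre
    linarith [this.1]
  set Θ : X → ℝ → ℂ := fun x t => B x + ∑ j ∈ Finset.range n,
    Complex.log (K x (q t (j+1)) / K x (q t j)) with hΘ_def
  refine ⟨Θ, ?_, ?_⟩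
  · apply Continuous.add (hB.comp continuous_fst)
    apply continuous_finset_sum
    intro j hj
    have hj' := Finset.mem_range.mp hj
    apply Continuous.clog
    · apply Continuous.div
      · exact hK.comp (continuous_fst.prodMk
          ((continuous_id.max continuous_const).min continuous_const |>.comp continuous_snd))
      · exact hK.comp (continuous_fst.prodMk
          ((continuous_id.max continuous_const).min continuous_const |>.comp continuous_snd))
      · intro p
        exact hne _ _
    · intro p
      exact hratio p.1 p.2 j hj'
  · intro x t ht
    have hmax : max t 0 = t := max_eq_left ht.1
    rw [hΘ_def]
    simp only [Complex.exp_add, Complex.exp_sum]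
    have hterm : ∀ j ∈ Finset.range n,
        Complex.exp (Complex.log (K x (q t (j+1)) / K x (q t j)))
          = K x (q t (j+1)) / K x (q t j) := by
      intro j hj
      exact Complex.exp_log (div_ne_zero (hne _ _) (hne _ _))
    rw [Finset.prod_congr rfl hterm]
    have tel : ∀ m : ℕ, ∏ j ∈ Finset.range m, (K x (q t (j+1)) / K x (q t j))
        = K x (q t m) / K x (q t 0) := by
      intro m
      induction m with
      | zero => simp [div_self (hne x (q t 0))]
      | succ m ih =>
        rw [Finset.prod_range_succ, ih, div_mul_div_comm,
          mul_comm (K x (q t m)) (K x (q t (m+1))), mul_div_mul_right _ _ (hne x (q t m))]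
    rw [tel n, hBe]
    have h0 : q t 0 = 0 := by
      simp [hq_def, hmax]
      exact ht.1
    have h1 : q t n = t := by
      simp [hq_def, hmax, div_self hn'.ne']
      exact ht.2
    rw [h0, h1]
    rw [mul_div_cancel₀ _ (hne x 0)]

def cc (s t : ℝ) : EuclideanSpace ℝ (Fin 3) :=
  (EuclideanSpace.equiv (Fin 3) ℝ).symm
    ![Real.cos (2*π*t) * Real.cos (π/2*s), Real.sin (2*π*t) * Real.cos (π/2*s),
      Real.sin (π/2*s)]

lemma cc_apply (s t : ℝ) (i : Fin 3) :
    cc s t i = ![Real.cos (2*π*t) * Real.cos (π/2*s), Real.sin (2*π*t) * Real.cos (π/2*s),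
      Real.sin (π/2*s)] i := rfl

lemma cc_norm (s t : ℝ) : ‖cc s t‖ = 1 := by
  rw [EuclideanSpace.norm_eq]
  have h1 := Real.sin_sq_add_cos_sq (2*π*t)
  have h2 := Real.sin_sq_add_cos_sq (π/2*s)
  rw [show (1:ℝ) = Real.sqrt 1 by simp]
  congr 1
  rw [Fin.sum_univ_three]
  simp only [cc_apply, Matrix.cons_val_zero, Matrix.cons_val_one, Matrix.head_cons,
    Matrix.cons_val_two, Matrix.tail_cons, Real.norm_eq_abs]
  rw [_root_.sq_abs, _root_.sq_abs, _root_.sq_abs]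
  nlinarith

def c (s t : ℝ) : S2 := ⟨cc s t, by simpa [mem_sphere_zero_iff_norm] using cc_norm s t⟩

lemma c_cont : Continuous fun p : ℝ × ℝ => c p.1 p.2 := by
  apply Continuous.subtype_mk
  show Continuous fun p : ℝ × ℝ => cc p.1 p.2
  unfold cc
  apply (EuclideanSpace.equiv (Fin 3) ℝ).symm.continuous.comp
  apply continuous_pi
  intro i
  fin_cases i <;> simp <;> fun_prop

lemma c_one (t : ℝ) : c 1 t = c 1 0 := by
  unfold c cc
  congr 1
  have : Real.cos (π/2*1) = 0 := by rw [mul_one]; exact Real.cos_pi_div_two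
  simp [this]

lemma c_period (s : ℝ) : c s 1 = c s 0 := by
  unfold c cc
  congr 1
  norm_num [Real.cos_two_pi, Real.sin_two_pi]

lemma c_half (t : ℝ) : c 0 (t + 1/2) = negS (c 0 t) := by
  unfold c negS cc
  apply Subtype.ext
  show (EuclideanSpace.equiv (Fin 3) ℝ).symm _ = -(EuclideanSpace.equiv (Fin 3) ℝ).symm _
  rw [← map_neg]
  congr 1
  have h : 2*π*(t + 2⁻¹) = 2*π*t + π := by ring
  have hc : Real.cos (2*π*(t + 2⁻¹)) = -Real.cos (2*π*t) := by rw [h, Real.cos_add_pi]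
  have hs : Real.sin (2*π*(t + 2⁻¹)) = -Real.sin (2*π*t) := by rw [h, Real.sin_add_pi]
  funext i
  fin_cases i <;> simp [hc, hs]

lemma odd_has_zero (f : S2 → ℂ) (hf : Continuous f)
    (hodd : ∀ x, f (negS x) = -f x) : ∃ x, f x = 0 := by
  by_contra hcon
  push_neg at hcon
  set F : ℝ × ℝ → ℂ := fun p => f (c p.1 p.2) with hF_def
  have hFc : Continuous F := hf.comp c_cont
  have hFne : ∀ p : ℝ × ℝ, F p ≠ 0 := fun p => hcon _
  -- minimum modulus
  have : CompactSpace S2 := isCompact_iff_compactSpace.mp (isCompact_sphere _ _)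
  obtain ⟨z₀, -, hz₀⟩ := isCompact_univ.exists_isMinOn (⟨c 0 0, trivial⟩ :
      (Set.univ : Set S2).Nonempty) (continuous_norm.comp hf).continuousOn
  set m := ‖f z₀‖ with hm_def
  have hm : 0 < m := norm_pos_iff.mpr (hcon z₀)
  have hmle : ∀ x : S2, m ≤ ‖f x‖ := fun x => hz₀ (trivial)
  -- uniform continuity
  have hUC := IsCompact.uniformContinuousOn_of_continuous
    ((isCompact_Icc (a := (0:ℝ)) (b := 1)).prod (isCompact_Icc (a := (0:ℝ)) (b := 1)))
    hFc.continuousOn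
  rw [Metric.uniformContinuousOn_iff] at hUC
  obtain ⟨δ, hδ, hδ'⟩ := hUC m hm
  obtain ⟨n0, hn0⟩ := exists_nat_one_div_lt hδ
  set N := n0 + 1 with hN_def
  have hN : 0 < N := Nat.succ_pos _
  have hN' : (1:ℝ)/N < δ := by exact_mod_cast hn0
  have key : ∀ p q : ℝ × ℝ, p ∈ Set.Icc (0:ℝ) 1 ×ˢ Set.Icc (0:ℝ) 1 →
      q ∈ Set.Icc (0:ℝ) 1 ×ˢ Set.Icc (0:ℝ) 1 → dist p q ≤ 1/N →
      ‖F p - F q‖ < ‖F q‖ := by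
    intro p q hp hq hd
    have h2 := hδ' p hp q hq (lt_of_le_of_lt hd hN')
    rw [Complex.dist_eq] at h2
    exact lt_of_lt_of_le h2 (hmle _)
  have hdist : ∀ (a u v : ℝ), dist ((a,u) : ℝ × ℝ) (a,v) = |u - v| := by
    intro a u v
    rw [Prod.dist_eq]
    simp [Real.dist_eq]
  have hdist' : ∀ (a u v : ℝ), dist ((u,a) : ℝ × ℝ) (v,a) = |u - v| := by
    intro a u v
    rw [Prod.dist_eq]
    simp [Real.dist_eq]
  -- lift along the bottom edge
  obtain ⟨Θ₀, hΘ₀c, hΘ₀⟩ := liftLemma (fun _ : Unit => fun s => F (s, 0))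
    (hFc.comp ((continuous_snd).prodMk continuous_const))
    (fun _ t => hFne _)
    (fun _ => Complex.log (F (0, 0))) continuous_const
    (fun _ => Complex.exp_log (hFne _)) N hN
    (by
      intro x u v hu hv hd
      apply key (u,0) (v,0) ⟨hu, by norm_num⟩ ⟨hv, by norm_num⟩
      rw [hdist']
      exact hd)
  -- clamp
  set cl : ℝ → ℝ := fun s => min (max s 0) 1 with hcl_def
  have hcl_mem : ∀ s, cl s ∈ Set.Icc (0:ℝ) 1 :=
    fun s => ⟨le_min (le_max_right _ _) zero_le_one, min_le_right _ _⟩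
  have hcl_cont : Continuous cl := (continuous_id.max continuous_const).min continuous_const
  have hcl0 : cl 0 = 0 := by norm_num [hcl_def]
  have hcl1 : cl 1 = 1 := by norm_num [hcl_def]
  -- lift over the whole homotopy
  obtain ⟨Θ, hΘc, hΘ⟩ := liftLemma (fun s t => F (cl s, t))
    (hFc.comp ((hcl_cont.comp continuous_fst).prodMk continuous_snd))
    (fun _ _ => hFne _)
    (fun s => Θ₀ () (cl s))
    (hΘ₀c.comp (continuous_const.prodMk hcl_cont))
    (fun s => hΘ₀ () (cl s) (hcl_mem s)) N hN
    (by
      intro x u v hu hv hd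
      apply key (cl x, u) (cl x, v) ⟨hcl_mem x, hu⟩ ⟨hcl_mem x, hv⟩
      rw [hdist]
      exact hd)
  -- basic F identities
  have hF1 : ∀ t, F (1, t) = F (1, 0) := fun t => by simp only [hF_def, c_one]
  have hFper : ∀ s, F (s, 1) = F (s, 0) := fun s => by simp only [hF_def, c_period]
  have hFhalf : ∀ t, F (0, t + 1/2) = -F (0, t) := fun t => by
    simp only [hF_def]
    rw [c_half, hodd]
  have h01 : (0:ℝ) ∈ Set.Icc (0:ℝ) 1 := ⟨le_rfl, zero_le_one⟩
  have h11 : (1:ℝ) ∈ Set.Icc (0:ℝ) 1 := ⟨zero_le_one, le_rfl⟩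
  have hhalf1 : (1/2:ℝ) ∈ Set.Icc (0:ℝ) 1 := by norm_num
  have hΘcont : Continuous fun p : ℝ × ℝ => Θ p.1 p.2 := hΘc
  -- Step A : Θ 1 1 = Θ 1 0
  have hA : Θ 1 1 - Θ 1 0 = 0 := by
    have hcA : ContinuousOn (fun t => Θ 1 t - Θ 1 0) (Set.Icc 0 1) :=
      ((hΘcont.comp (continuous_const.prodMk continuous_id)).sub continuous_const).continuousOn
    have := lemA (fun t => Θ 1 t - Θ 1 0) hcA (by
      intro t ht
      rw [Complex.exp_sub, hΘ 1 t ht, hΘ 1 0 h01, hcl1, hF1 t, div_self (hFne _)])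
    simpa using this
  -- Step B : Θ 0 1 = Θ 0 0
  have hB : Θ 0 1 - Θ 0 0 = 0 := by
    have hcB : ContinuousOn (fun s => Θ s 1 - Θ s 0) (Set.Icc 0 1) :=
      ((hΘcont.comp (continuous_id.prodMk continuous_const)).sub
        (hΘcont.comp (continuous_id.prodMk continuous_const))).continuousOn
    have := lemA (fun s => Θ s 1 - Θ s 0) hcB (by
      intro s hs
      rw [Complex.exp_sub, hΘ s 1 h11, hΘ s 0 h01, hFper, div_self (hFne _)])
    have h2 : Θ 1 1 - Θ 1 0 = Θ 0 1 - Θ 0 0 := this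
    rw [← h2]
    exact hA
  -- Step C : odd jump
  have hC : Θ 0 1 - Θ 0 (1/2) = Θ 0 (1/2) - Θ 0 0 := by
    have hcC : ContinuousOn (fun t : ℝ => Θ 0 ((t+1)/2) - Θ 0 (t/2) - (π : ℂ) * I)
        (Set.Icc 0 1) := by
      apply ContinuousOn.sub _ continuousOn_const
      apply ContinuousOn.sub
      · exact (hΘcont.comp (continuous_const.prodMk (by fun_prop))).continuousOn
      · exact (hΘcont.comp (continuous_const.prodMk (by fun_prop))).continuousOn
    have hmem1 : ∀ t ∈ Set.Icc (0:ℝ) 1, (t+1)/2 ∈ Set.Icc (0:ℝ) 1 := by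
      intro t ht
      constructor <;> [linarith [ht.1]; linarith [ht.2]]
    have hmem2 : ∀ t ∈ Set.Icc (0:ℝ) 1, t/2 ∈ Set.Icc (0:ℝ) 1 := by
      intro t ht
      constructor <;> [linarith [ht.1]; linarith [ht.2]]
    have := lemA (fun t : ℝ => Θ 0 ((t+1)/2) - Θ 0 (t/2) - (π : ℂ) * I) hcC (by
      intro t ht
      rw [Complex.exp_sub, Complex.exp_sub, hΘ 0 _ (hmem1 t ht), hΘ 0 _ (hmem2 t ht),
        hcl0, Complex.exp_pi_mul_I]
      rw [show (t+1)/2 = t/2 + 1/2 by ring, hFhalf]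
      rw [neg_div, div_self (hFne _)]
      norm_num)
    norm_num at this
    linear_combination this
  -- conclude
  have hd0 : Θ 0 (1/2) - Θ 0 0 = 0 := by
    have : (Θ 0 1 - Θ 0 0) = 2 * (Θ 0 (1/2) - Θ 0 0) := by linear_combination hC
    rw [hB] at this
    have h2 : (2:ℂ) * (Θ 0 (1/2) - Θ 0 0) = 0 := this.symm
    exact (mul_eq_zero.mp h2).resolve_left two_ne_zero
  have hexp : Complex.exp (Θ 0 (1/2) - Θ 0 0) = -1 := by
    rw [Complex.exp_sub, hΘ 0 _ hhalf1, hΘ 0 0 h01, hcl0,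
      show (1/2:ℝ) = 0 + 1/2 by ring, hFhalf, neg_div, div_self (hFne _)]
  rw [hd0, Complex.exp_zero] at hexp
  norm_num at hexp

/-- Every odd continuous function on S² has a zero; consequently A₋ is not a free
A₊-module of rank one: no odd continuous f makes g ↦ g·f a bijection A₊ → A₋. -/
theorem stmt8 :
    (∀ f : S2 → ℂ, Continuous f → (∀ x, f (negS x) = -f x) → ∃ x, f x = 0) ∧
    ¬ ∃ f : S2 → ℂ, (Continuous f ∧ ∀ x, f (negS x) = -f x) ∧
        Set.BijOn (fun g : S2 → ℂ => fun x => g x * f x) Aplus Aminus := by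
  refine ⟨odd_has_zero, ?_⟩
  rintro ⟨f, ⟨hfc, hfodd⟩, hbij⟩
  obtain ⟨x₀, hx₀⟩ := odd_has_zero f hfc hfodd
  set g : S2 → ℂ := fun x =>
    ((inner ℝ (x : EuclideanSpace ℝ (Fin 3)) (x₀ : EuclideanSpace ℝ (Fin 3)) : ℝ) : ℂ) with hg_def
  have hgmem : g ∈ Aminus := by
    refine ⟨Complex.continuous_ofReal.comp (continuous_subtype_val.inner continuous_const), ?_⟩
    intro x
    have hcoe : ((negS x : S2) : EuclideanSpace ℝ (Fin 3)) = -(x : EuclideanSpace ℝ (Fin 3)) :=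
      rfl
    simp only [hg_def, hcoe, inner_neg_left]
    push_cast
    ring
  have hgx₀ : g x₀ = 1 := by
    have hn : ‖(x₀ : EuclideanSpace ℝ (Fin 3))‖ = 1 := mem_sphere_zero_iff_norm.mp x₀.2
    simp only [hg_def, real_inner_self_eq_norm_mul_norm, hn]
    norm_num
  obtain ⟨h, -, hhe⟩ := hbij.2.2 hgmem
  have := congrFun hhe x₀
  simp only [hx₀, mul_zero] at this
  rw [hgx₀] at this
  exact zero_ne_one this
end
end
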